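/- Let G : ℝⁿ × ℝᵏ → ℝ be a globally simple generating function, i.e. for every q ∈ ℝⁿ the partial gradient map w ↦ ∇_w G(q,w) is a diffeomorphism of ℝᵏ, and the full gradient ∇G is a diffeomorphism of ℝⁿ × ℝᵏ. Then the contour L_G is the 1-graph of a simple function: there exists a smooth function g : ℝⁿ → ℝ with ∇g a diffeomorphism of ℝⁿ such that L_G = j¹g; explicitly, g(q) = G(q, w(q)) where w(q) is the unique solution of ∇_w G(q,w) = 0, the map q ↦ w(q) is smooth, and ∇g(q) = ∇_q G(q, w(q)). Moreover, the contour of G_T(q,(v,w)) := ⟨q,v⟩ − G(v,w) is the 1-graph of the Legendre transform: L_{G_T} = j¹(gᵗ). -/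

import Mathlib

noncomputable section

/-- g : X → X is a diffeomorphism: a smooth bijection with smooth inverse. -/
def IsDiffeo {X : Type*} [NormedAddCommGroup X] [NormedSpace ℝ X] (g : X → X) : Prop :=
  ∃ e : X ≃ X, ⇑e = g ∧ ContDiff ℝ (⊤ : ℕ∞) ⇑e ∧ ContDiff ℝ (⊤ : ℕ∞) ⇑e.symm

/-- The contour L_F of a generating function F : ℝⁿ × ℝᵏ → ℝ with base variable q and
fiber variable w: L_F = {(F(q,w), q, ∇_q F(q,w)) | ∇_w F(q,w) = 0}. -/
def gfContour {n k : ℕ}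
    (F : EuclideanSpace ℝ (Fin n) × EuclideanSpace ℝ (Fin k) → ℝ) :
    Set (ℝ × EuclideanSpace ℝ (Fin n) × EuclideanSpace ℝ (Fin n)) :=
  {x | ∃ q w, gradient (fun w' => F (q, w')) w = 0 ∧
    x = (F (q, w), q, gradient (fun q' => F (q', w)) q)}

/-- The contour of a generating function F : ℝⁿ × (ℝⁿ × ℝᵏ) → ℝ with base variable q
and fiber variables (v,w). -/
def gfContour2 {n m k : ℕ}
    (F : EuclideanSpace ℝ (Fin n) × (EuclideanSpace ℝ (Fin m) × EuclideanSpace ℝ (Fin k)) → ℝ) :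
    Set (ℝ × EuclideanSpace ℝ (Fin n) × EuclideanSpace ℝ (Fin n)) :=
  {x | ∃ q v w, gradient (fun v' => F (q, (v', w))) v = 0 ∧
    gradient (fun w' => F (q, (v, w'))) w = 0 ∧
    x = (F (q, (v, w)), q, gradient (fun q' => F (q', (v, w))) q)}

/-- The 1-graph j¹f = {(f(q), q, ∇f(q)) | q ∈ ℝⁿ}. -/
def oneJetGraph {n : ℕ} (f : EuclideanSpace ℝ (Fin n) → ℝ) :
    Set (ℝ × EuclideanSpace ℝ (Fin n) × EuclideanSpace ℝ (Fin n)) :=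
  {x | ∃ q, x = (f q, q, gradient f q)}

/- ### Auxiliary machinery -/

open InnerProductSpace

theorem aux_one_le' : ((⊤ : ℕ∞) : WithTop ℕ∞) ≠ 0 := by
  simp

section Inverse

variable {X : Type*} [NormedAddCommGroup X] [NormedSpace ℝ X] [FiniteDimensional ℝ X]

omit [FiniteDimensional ℝ X] in
theorem fderiv_injective_of_inv {f g : X → X} (hf : ContDiff ℝ (⊤ : ℕ∞) f)
    (hg : ContDiff ℝ (⊤ : ℕ∞) g) (hgf : ∀ x, g (f x) = x) (x : X) :
    Function.Injective (fderiv ℝ f x) := by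
  have h1 : fderiv ℝ (g ∘ f) x = (fderiv ℝ g (f x)).comp (fderiv ℝ f x) :=
    fderiv_comp x (hg.differentiable aux_one_le' _) (hf.differentiable aux_one_le' _)
  have h2 : (g ∘ f) = fun y => y := funext hgf
  rw [h2, fderiv_id'] at h1
  intro u v huv
  have hu : u = ((fderiv ℝ g (f x)).comp (fderiv ℝ f x)) u := by rw [← h1]; rfl
  have hv : v = ((fderiv ℝ g (f x)).comp (fderiv ℝ f x)) v := by rw [← h1]; rfl
  rw [hu, hv]
  simp only [ContinuousLinearMap.comp_apply, huv]

theorem contDiff_invFun {f : X → X} (hf : ContDiff ℝ (⊤ : ℕ∞) f)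
    (hbij : Function.Bijective f) (hinj : ∀ x, Function.Injective (fderiv ℝ f x)) :
    ContDiff ℝ (⊤ : ℕ∞) (Function.invFun f) := by
  rw [contDiff_iff_contDiffAt]
  intro y
  obtain ⟨x, rfl⟩ := hbij.2 y
  have hTbij : Function.Bijective ((fderiv ℝ f x : X →ₗ[ℝ] X)) := by
    refine ⟨hinj x, ?_⟩
    exact LinearMap.injective_iff_surjective.mp (hinj x)
  let f' : X ≃L[ℝ] X :=
    (LinearEquiv.ofBijective ((fderiv ℝ f x) : X →ₗ[ℝ] X) hTbij).toContinuousLinearEquiv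
  have hf'd : HasFDerivAt f (f' : X →L[ℝ] X) x := by
    have h := (hf.differentiable aux_one_le' x).hasFDerivAt
    have he : (f' : X →L[ℝ] X) = fderiv ℝ f x := by ext v; rfl
    rw [he]
    exact h
  have hca : ContDiffAt ℝ (⊤ : ℕ∞) f x := hf.contDiffAt
  have hci := hca.to_localInverse (f' := f') hf'd aux_one_le'
  refine hci.congr_of_eventuallyEq ?_
  have hs : HasStrictFDerivAt f (f' : X →L[ℝ] X) x := hca.hasStrictFDerivAt' hf'd aux_one_le'
  have hev : ∀ᶠ z in nhds (f x), f (hs.localInverse f f' x z) = z := hs.eventually_right_inverse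
  filter_upwards [hev] with z hz
  have h3 : Function.invFun f z = Function.invFun f (f (hs.localInverse f f' x z)) := by rw [hz]
  rw [h3, Function.leftInverse_invFun hbij.1]
  rfl

end Inverse

section PGrad

set_option linter.unusedSectionVars false

variable {E F : Type*} [NormedAddCommGroup E] [InnerProductSpace ℝ E] [CompleteSpace E]
  [NormedAddCommGroup F] [InnerProductSpace ℝ F] [CompleteSpace F]

/-- The inverse of `toDual` bundled as a continuous linear map (over ℝ). -/
def toDualSymmL (F : Type*) [NormedAddCommGroup F] [InnerProductSpace ℝ F] [CompleteSpace F] :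
    (F →L[ℝ] ℝ) →L[ℝ] F where
  toFun := fun T => (toDual ℝ F).symm T
  map_add' := fun a b => by simp
  map_smul' := fun c a => by simp
  cont := (toDual ℝ F).symm.continuous

/-- Partial gradient in the second variable. -/
def pg2 (G : E × F → ℝ) (x : E × F) : F :=
  (toDual ℝ F).symm ((fderiv ℝ G x).comp (ContinuousLinearMap.inr ℝ E F))

/-- Partial gradient in the first variable. -/
def pg1 (G : E × F → ℝ) (x : E × F) : E :=
  (toDual ℝ E).symm ((fderiv ℝ G x).comp (ContinuousLinearMap.inl ℝ E F))

theorem toDual_pg2 (G : E × F → ℝ) (x : E × F) :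
    toDual ℝ F (pg2 G x) = (fderiv ℝ G x).comp (ContinuousLinearMap.inr ℝ E F) :=
  (toDual ℝ F).apply_symm_apply _

theorem toDual_pg1 (G : E × F → ℝ) (x : E × F) :
    toDual ℝ E (pg1 G x) = (fderiv ℝ G x).comp (ContinuousLinearMap.inl ℝ E F) :=
  (toDual ℝ E).apply_symm_apply _

theorem hasFDerivAt_pg2 {G : E × F → ℝ} (hG : Differentiable ℝ G) (x : E × F) :
    HasFDerivAt (fun w => G (x.1, w)) ((fderiv ℝ G x).comp (ContinuousLinearMap.inr ℝ E F)) x.2 :=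
  (hG x).hasFDerivAt.comp x.2 (hasFDerivAt_prodMk_right x.1 x.2)

theorem hasFDerivAt_pg1 {G : E × F → ℝ} (hG : Differentiable ℝ G) (x : E × F) :
    HasFDerivAt (fun q => G (q, x.2)) ((fderiv ℝ G x).comp (ContinuousLinearMap.inl ℝ E F)) x.1 :=
  (hG x).hasFDerivAt.comp x.1 (hasFDerivAt_prodMk_left x.1 x.2)

theorem hasGradientAt_pg2 {G : E × F → ℝ} (hG : Differentiable ℝ G) (x : E × F) :
    HasGradientAt (fun w => G (x.1, w)) (pg2 G x) x.2 := by
  rw [hasGradientAt_iff_hasFDerivAt, toDual_pg2]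
  exact hasFDerivAt_pg2 hG x

theorem hasGradientAt_pg1 {G : E × F → ℝ} (hG : Differentiable ℝ G) (x : E × F) :
    HasGradientAt (fun q => G (q, x.2)) (pg1 G x) x.1 := by
  rw [hasGradientAt_iff_hasFDerivAt, toDual_pg1]
  exact hasFDerivAt_pg1 hG x

theorem contDiff_pg2 {G : E × F → ℝ} (hG : ContDiff ℝ (⊤ : ℕ∞) G) :
    ContDiff ℝ (⊤ : ℕ∞) (pg2 G) := by
  have h1 : ContDiff ℝ (⊤ : ℕ∞) (fderiv ℝ G) := hG.fderiv_right (by exact_mod_cast le_top)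
  have h2 : ContDiff ℝ (⊤ : ℕ∞)
      (fun T : (E × F) →L[ℝ] ℝ => T.comp (ContinuousLinearMap.inr ℝ E F)) :=
    ((ContinuousLinearMap.compL ℝ F (E × F) ℝ).flip (ContinuousLinearMap.inr ℝ E F)).contDiff
  exact (toDualSymmL F).contDiff.comp (h2.comp h1)

theorem contDiff_pg1 {G : E × F → ℝ} (hG : ContDiff ℝ (⊤ : ℕ∞) G) :
    ContDiff ℝ (⊤ : ℕ∞) (pg1 G) := by
  have h1 : ContDiff ℝ (⊤ : ℕ∞) (fderiv ℝ G) := hG.fderiv_right (by exact_mod_cast le_top)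
  have h2 : ContDiff ℝ (⊤ : ℕ∞)
      (fun T : (E × F) →L[ℝ] ℝ => T.comp (ContinuousLinearMap.inl ℝ E F)) :=
    ((ContinuousLinearMap.compL ℝ E (E × F) ℝ).flip (ContinuousLinearMap.inl ℝ E F)).contDiff
  exact (toDualSymmL E).contDiff.comp (h2.comp h1)

end PGrad

/-- Let G : ℝⁿ × ℝᵏ → ℝ be a globally simple generating function ... -/
theorem stmt18 (n k : ℕ)
    (G : EuclideanSpace ℝ (Fin n) × EuclideanSpace ℝ (Fin k) → ℝ)
    (hG : ContDiff ℝ (⊤ : ℕ∞) G)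
    (hfib : ∀ q, IsDiffeo (fun w => gradient (fun w' => G (q, w')) w))
    (hfull : IsDiffeo (fun x : EuclideanSpace ℝ (Fin n) × EuclideanSpace ℝ (Fin k) =>
      (gradient (fun q' => G (q', x.2)) x.1, gradient (fun w' => G (x.1, w')) x.2))) :
    ∃ (g : EuclideanSpace ℝ (Fin n) → ℝ)
      (wmap : EuclideanSpace ℝ (Fin n) → EuclideanSpace ℝ (Fin k))
      (ψ : EuclideanSpace ℝ (Fin n) ≃ EuclideanSpace ℝ (Fin n)),
      ContDiff ℝ (⊤ : ℕ∞) wmap ∧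
      (∀ q, gradient (fun w' => G (q, w')) (wmap q) = 0) ∧
      (∀ q w, gradient (fun w' => G (q, w')) w = 0 → w = wmap q) ∧
      (∀ q, g q = G (q, wmap q)) ∧
      ContDiff ℝ (⊤ : ℕ∞) g ∧
      (∀ q, gradient g q = gradient (fun q' => G (q', wmap q)) q) ∧
      ⇑ψ = gradient g ∧
      ContDiff ℝ (⊤ : ℕ∞) ⇑ψ ∧ ContDiff ℝ (⊤ : ℕ∞) ⇑ψ.symm ∧
      gfContour G = oneJetGraph g ∧
      gfContour2 (fun x => (inner ℝ x.1 x.2.1 : ℝ) - G (x.2.1, x.2.2))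
        = oneJetGraph (fun q => (inner ℝ q (ψ.symm q) : ℝ) - g (ψ.symm q)) := by
  classical
  obtain ⟨Φe, hΦcoe, hΦc, hΦsc⟩ := hfull
  have hGd : Differentiable ℝ G := hG.differentiable aux_one_le'
  have hgrad2 : ∀ q w, gradient (fun w' => G (q, w')) w = pg2 G (q, w) :=
    fun q w => (hasGradientAt_pg2 hGd (q, w)).gradient
  have hgrad1 : ∀ q w, gradient (fun q' => G (q', w)) q = pg1 G (q, w) :=
    fun q w => (hasGradientAt_pg1 hGd (q, w)).gradient
  have hgwc := contDiff_pg2 hG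
  have hgqc := contDiff_pg1 hG
  have hgwd : Differentiable ℝ (pg2 G) := hgwc.differentiable aux_one_le'
  -- the map β(q,w) = (q, ∇_w G(q,w)) is a smooth bijection with injective derivative
  set β := fun x : EuclideanSpace ℝ (Fin n) × EuclideanSpace ℝ (Fin k) => (x.1, pg2 G x)
    with hβdef
  have hβc : ContDiff ℝ (⊤ : ℕ∞) β := contDiff_fst.prodMk hgwc
  have hβapp : ∀ z, β z = (z.1, pg2 G z) := fun z => by rw [hβdef]
  have hβinj : ∀ x, Function.Injective (fderiv ℝ β x) := by
    intro x
    have h1 : HasFDerivAt β ((ContinuousLinearMap.fst ℝ _ _).prod (fderiv ℝ (pg2 G) x)) x :=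
      HasFDerivAt.prodMk hasFDerivAt_fst (hgwd x).hasFDerivAt
    rw [h1.fderiv]
    intro u v huv
    simp only [ContinuousLinearMap.prod_apply, ContinuousLinearMap.coe_fst',
      Prod.mk.injEq] at huv
    obtain ⟨h2, h3⟩ := huv
    refine Prod.ext h2 ?_
    obtain ⟨e, he, hec, hesc⟩ := hfib x.1
    have hfun : (fun w' => pg2 G (x.1, w')) = ⇑e := by
      funext w'
      rw [he]
      exact (hgrad2 x.1 w').symm
    have hinjf : Function.Injective (fderiv ℝ (fun w' => pg2 G (x.1, w')) x.2) := by
      rw [hfun]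
      exact fderiv_injective_of_inv hec hesc e.left_inv x.2
    have hchain : fderiv ℝ (fun w' => pg2 G (x.1, w')) x.2
        = (fderiv ℝ (pg2 G) x).comp (ContinuousLinearMap.inr ℝ _ _) :=
      by have h := (hgwd (x.1, x.2)).hasFDerivAt.comp x.2 (hasFDerivAt_prodMk_right (𝕜 := ℝ) x.1 x.2); exact h.fderiv
    apply hinjf
    rw [hchain]
    simp only [ContinuousLinearMap.comp_apply, ContinuousLinearMap.inr_apply]
    have e1 : ((0 : EuclideanSpace ℝ (Fin n)), u.2)
        = u - (u.1, (0 : EuclideanSpace ℝ (Fin k))) := by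
      simp [Prod.ext_iff]
    have e2 : ((0 : EuclideanSpace ℝ (Fin n)), v.2)
        = v - (u.1, (0 : EuclideanSpace ℝ (Fin k))) := by
      simp [Prod.ext_iff, ← h2]
    rw [e1, e2, map_sub, map_sub, h3]
  have hβbij : Function.Bijective β := by
    constructor
    · intro x y hxy
      rw [hβapp x, hβapp y, Prod.mk.injEq] at hxy
      obtain ⟨h1, h2'⟩ := hxy
      obtain ⟨e, he, -, -⟩ := hfib x.1
      have hfun : ∀ w', e w' = pg2 G (x.1, w') := by
        intro w'
        exact (congrFun he w').trans (hgrad2 x.1 w')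
      refine Prod.ext h1 (e.injective ?_)
      have hx : e x.2 = pg2 G x := hfun x.2
      have hy : e y.2 = pg2 G y := by
        have h := hfun y.2
        rw [h1] at h
        exact h
      rw [hx, hy, h2']
    · intro p
      obtain ⟨e, he, -, -⟩ := hfib p.1
      refine ⟨(p.1, e.symm p.2), ?_⟩
      have hv : pg2 G (p.1, e.symm p.2) = p.2 := by
        have h := congrFun he (e.symm p.2)
        rw [e.apply_symm_apply] at h
        rw [← hgrad2]
        exact h.symm
      rw [hβapp, hv]
  have hβinv := contDiff_invFun hβc hβbij hβinj
  have hβri : ∀ p, β (Function.invFun β p) = p :=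
    fun p => Function.rightInverse_invFun hβbij.2 p
  -- the critical-point selection map
  set wmap := fun q : EuclideanSpace ℝ (Fin n) =>
      (Function.invFun β (q, (0 : EuclideanSpace ℝ (Fin k)))).2 with hwmdef
  have hwmc : ContDiff ℝ (⊤ : ℕ∞) wmap :=
    contDiff_snd.comp (hβinv.comp (contDiff_id.prodMk contDiff_const))
  have hwmd : Differentiable ℝ wmap := hwmc.differentiable aux_one_le'
  have hkey0 : ∀ q : EuclideanSpace ℝ (Fin n),
      ((Function.invFun β (q, (0 : EuclideanSpace ℝ (Fin k)))).1 = q ∧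
        pg2 G (Function.invFun β (q, (0 : EuclideanSpace ℝ (Fin k)))) = 0) := by
    intro q
    have h := (hβapp (Function.invFun β (q, 0))).symm.trans (hβri (q, 0))
    rw [Prod.mk.injEq] at h
    exact h
  have hwz : ∀ q, pg2 G (q, wmap q) = 0 := by
    intro q
    have h2 := (hkey0 q).2
    have h1 : Function.invFun β (q, (0 : EuclideanSpace ℝ (Fin k))) = (q, wmap q) :=
      Prod.ext (hkey0 q).1 rfl
    rw [h1] at h2
    exact h2
  have hzero : ∀ q, gradient (fun w' => G (q, w')) (wmap q) = 0 := by
    intro q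
    rw [hgrad2]
    exact hwz q
  have huniq : ∀ q w, gradient (fun w' => G (q, w')) w = 0 → w = wmap q := by
    intro q w hw
    obtain ⟨e, he, -, -⟩ := hfib q
    apply e.injective
    have h1 : e w = 0 := (congrFun he w).trans hw
    have h2 : e (wmap q) = 0 := (congrFun he (wmap q)).trans (hzero q)
    rw [h1, h2]
  -- the function g and its gradient
  have hgc : ContDiff ℝ (⊤ : ℕ∞) (fun q => G (q, wmap q)) :=
    hG.comp (contDiff_id.prodMk hwmc)
  have hgradg : ∀ q, HasGradientAt (fun q' => G (q', wmap q')) (pg1 G (q, wmap q)) q := by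
    intro q
    rw [hasGradientAt_iff_hasFDerivAt]
    have hj : HasFDerivAt (fun q' => (q', wmap q'))
        ((ContinuousLinearMap.id ℝ _).prod (fderiv ℝ wmap q)) q :=
      HasFDerivAt.prodMk (hasFDerivAt_id q) (hwmd q).hasFDerivAt
    have hcomp := (hGd (q, wmap q)).hasFDerivAt.comp q hj
    have heq : toDual ℝ _ (pg1 G (q, wmap q))
        = (fderiv ℝ G (q, wmap q)).comp
            ((ContinuousLinearMap.id ℝ _).prod (fderiv ℝ wmap q)) := by
      rw [toDual_pg1]
      ext v
      simp only [ContinuousLinearMap.comp_apply, ContinuousLinearMap.inl_apply,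
        ContinuousLinearMap.prod_apply, ContinuousLinearMap.coe_id', id_eq]
      have hsplit : ((v : EuclideanSpace ℝ (Fin n)), fderiv ℝ wmap q v)
          = (v, (0 : EuclideanSpace ℝ (Fin k))) + ((0 : EuclideanSpace ℝ (Fin n)),
            fderiv ℝ wmap q v) := by
        simp [Prod.ext_iff]
      rw [hsplit, map_add]
      have hz : fderiv ℝ G (q, wmap q)
          ((0 : EuclideanSpace ℝ (Fin n)), fderiv ℝ wmap q v) = 0 := by
        have h1 : fderiv ℝ G (q, wmap q)
            ((0 : EuclideanSpace ℝ (Fin n)), fderiv ℝ wmap q v)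
            = ((fderiv ℝ G (q, wmap q)).comp
                (ContinuousLinearMap.inr ℝ _ _)) (fderiv ℝ wmap q v) := rfl
        rw [h1, ← toDual_pg2, hwz q]
        simp
      rw [hz, add_zero]
    rw [heq]
    exact hcomp
  -- construct ψ
  have hΦ : ∀ x : EuclideanSpace ℝ (Fin n) × EuclideanSpace ℝ (Fin k),
      Φe x = (pg1 G x, pg2 G x) := by
    intro x
    have h := congrFun hΦcoe x
    rw [h, hgrad1 x.1 x.2, hgrad2 x.1 x.2]
  have hleft : ∀ q, Φe (q, wmap q) = (pg1 G (q, wmap q), 0) := by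
    intro q
    rw [hΦ (q, wmap q)]
    rw [hwz q]
  set ψ : EuclideanSpace ℝ (Fin n) ≃ EuclideanSpace ℝ (Fin n) :=
    { toFun := fun q => pg1 G (q, wmap q)
      invFun := fun p => (Φe.symm (p, (0 : EuclideanSpace ℝ (Fin k)))).1
      left_inv := by
        intro q
        show (Φe.symm (pg1 G (q, wmap q), (0 : EuclideanSpace ℝ (Fin k)))).1 = q
        rw [← hleft q, Equiv.symm_apply_apply]
      right_inv := by
        intro p
        set x := Φe.symm (p, (0 : EuclideanSpace ℝ (Fin k))) with hx
        have h1 : Φe x = (p, 0) := Φe.apply_symm_apply _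
        rw [hΦ x] at h1
        have h2 : pg1 G x = p := congrArg Prod.fst h1
        have h3 : pg2 G x = 0 := congrArg Prod.snd h1
        have h4 : x.2 = wmap x.1 := huniq x.1 x.2 (by rw [hgrad2]; exact h3)
        show pg1 G (x.1, wmap x.1) = p
        rw [← h4]
        exact h2 } with hψdef
  have hψc : ContDiff ℝ (⊤ : ℕ∞) ⇑ψ := hgqc.comp (contDiff_id.prodMk hwmc)
  have hψsc : ContDiff ℝ (⊤ : ℕ∞) ⇑ψ.symm :=
    contDiff_fst.comp (hΦsc.comp (contDiff_id.prodMk contDiff_const))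
  have hψcoe : ⇑ψ = gradient (fun q => G (q, wmap q)) :=
    funext fun q => ((hgradg q).gradient).symm
  -- contour 1
  have hC1 : gfContour G = oneJetGraph (fun q => G (q, wmap q)) := by
    ext x
    constructor
    · rintro ⟨q, w, h0, rfl⟩
      have hw : w = wmap q := huniq q w h0
      subst hw
      refine ⟨q, ?_⟩
      refine Prod.ext rfl (Prod.ext rfl ?_)
      show gradient (fun q' => G (q', wmap q)) q = gradient (fun q' => G (q', wmap q')) q
      rw [hgrad1 q (wmap q)]
      exact ((hgradg q).gradient).symm
    · rintro ⟨q, rfl⟩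
      refine ⟨q, wmap q, hzero q, ?_⟩
      refine Prod.ext rfl (Prod.ext rfl ?_)
      show gradient (fun q' => G (q', wmap q')) q = gradient (fun q' => G (q', wmap q)) q
      rw [hgrad1 q (wmap q)]
      exact (hgradg q).gradient
  -- gradient computations for the Legendre side
  have hGTa : ∀ (q v : EuclideanSpace ℝ (Fin n)) (w : EuclideanSpace ℝ (Fin k)),
      HasGradientAt (fun v' => (inner ℝ q v' : ℝ) - G (v', w)) (q - pg1 G (v, w)) v := by
    intro q v w
    rw [hasGradientAt_iff_hasFDerivAt]
    have h1 : HasFDerivAt (fun v' : EuclideanSpace ℝ (Fin n) => (inner ℝ q v' : ℝ))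
        (toDual ℝ (EuclideanSpace ℝ (Fin n)) q) v :=
      (toDual ℝ (EuclideanSpace ℝ (Fin n)) q).hasFDerivAt
    have h3 := h1.sub (hasFDerivAt_pg1 hGd (v, w))
    rw [map_sub, toDual_pg1]
    exact h3
  have hGTb : ∀ (q v : EuclideanSpace ℝ (Fin n)) (w : EuclideanSpace ℝ (Fin k)),
      HasGradientAt (fun w' => (inner ℝ q v : ℝ) - G (v, w')) (-(pg2 G (v, w))) w := by
    intro q v w
    rw [hasGradientAt_iff_hasFDerivAt]
    have h1 : HasFDerivAt (fun _ : EuclideanSpace ℝ (Fin k) => (inner ℝ q v : ℝ))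
        (0 : EuclideanSpace ℝ (Fin k) →L[ℝ] ℝ) w :=
      hasFDerivAt_const _ _
    have h3 := h1.sub (hasFDerivAt_pg2 hGd (v, w))
    rw [zero_sub] at h3
    rw [map_neg, toDual_pg2]
    exact h3
  have hGTc : ∀ (q v : EuclideanSpace ℝ (Fin n)) (w : EuclideanSpace ℝ (Fin k)),
      HasGradientAt (fun q' => (inner ℝ q' v : ℝ) - G (v, w)) v q := by
    intro q v w
    rw [hasGradientAt_iff_hasFDerivAt]
    have h1 : HasFDerivAt (fun q' : EuclideanSpace ℝ (Fin n) => (inner ℝ q' v : ℝ))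
        (toDual ℝ (EuclideanSpace ℝ (Fin n)) v) q := by
      have h := (toDual ℝ (EuclideanSpace ℝ (Fin n)) v).hasFDerivAt (x := q)
      apply h.congr_of_eventuallyEq
      filter_upwards with q'
      exact real_inner_comm v q'
    have h3 := h1.sub (hasFDerivAt_const (G (v, w)) q)
    rw [sub_zero] at h3
    exact h3
  -- gradient of the Legendre transform
  have hgT : ∀ p, HasGradientAt
      (fun q => (inner ℝ q (ψ.symm q) : ℝ) - G (ψ.symm q, wmap (ψ.symm q))) (ψ.symm p) p := by
    intro p
    rw [hasGradientAt_iff_hasFDerivAt]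
    have hhc : ContDiff ℝ (⊤ : ℕ∞) ⇑ψ.symm := hψsc
    have hhd : HasFDerivAt ⇑ψ.symm (fderiv ℝ ⇑ψ.symm p) p :=
      (hhc.differentiable aux_one_le' p).hasFDerivAt
    have hinner : HasFDerivAt
        (fun q : EuclideanSpace ℝ (Fin n) => (inner ℝ q (ψ.symm q) : ℝ))
        ((fderivInnerCLM ℝ (p, ψ.symm p)).comp
          ((ContinuousLinearMap.id ℝ (EuclideanSpace ℝ (Fin n))).prod
            (fderiv ℝ ⇑ψ.symm p))) p :=
      (hasFDerivAt_id p).inner ℝ hhd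
    have hgrad_at : HasFDerivAt (fun q' => G (q', wmap q'))
        (toDual ℝ (EuclideanSpace ℝ (Fin n)) (pg1 G (ψ.symm p, wmap (ψ.symm p))))
        (ψ.symm p) := by
      have h := hgradg (ψ.symm p)
      rwa [hasGradientAt_iff_hasFDerivAt] at h
    have hkeyp : pg1 G (ψ.symm p, wmap (ψ.symm p)) = p := ψ.right_inv p
    rw [hkeyp] at hgrad_at
    have hcomp := hgrad_at.comp p hhd
    have htot := hinner.sub hcomp
    have heq : toDual ℝ (EuclideanSpace ℝ (Fin n)) (ψ.symm p)
        = ((fderivInnerCLM ℝ (p, ψ.symm p)).comp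
          ((ContinuousLinearMap.id ℝ (EuclideanSpace ℝ (Fin n))).prod
            (fderiv ℝ ⇑ψ.symm p)))
          - (toDual ℝ (EuclideanSpace ℝ (Fin n)) p).comp (fderiv ℝ ⇑ψ.symm p) := by
      ext v
      simp only [ContinuousLinearMap.comp_apply, ContinuousLinearMap.sub_apply,
        ContinuousLinearMap.prod_apply, ContinuousLinearMap.coe_id', id_eq,
        fderivInnerCLM_apply, toDual_apply_apply]
      rw [real_inner_comm (ψ.symm p) v]
      ring
    rw [heq]
    exact htot
  -- contour 2
  have hC2 : gfContour2 (fun x : EuclideanSpace ℝ (Fin n) ×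
        (EuclideanSpace ℝ (Fin n) × EuclideanSpace ℝ (Fin k)) =>
        (inner ℝ x.1 x.2.1 : ℝ) - G (x.2.1, x.2.2))
      = oneJetGraph (fun q => (inner ℝ q (ψ.symm q) : ℝ) - G (ψ.symm q, wmap (ψ.symm q))) := by
    ext x
    constructor
    · rintro ⟨q, v, w, h1, h2, rfl⟩
      have h1' : q - pg1 G (v, w) = 0 := by
        rw [← (hGTa q v w).gradient]
        exact h1
      have h2' : -(pg2 G (v, w)) = 0 := by
        rw [← (hGTb q v w).gradient]
        exact h2
      have hpz : pg2 G (v, w) = 0 := neg_eq_zero.mp h2'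
      have hw : w = wmap v := huniq v w ((hgrad2 v w).trans hpz)
      subst hw
      have hq : q = pg1 G (v, wmap v) := sub_eq_zero.mp h1'
      have hv : v = ψ.symm q := by
        rw [hq]
        exact (ψ.left_inv v).symm
      refine ⟨q, ?_⟩
      refine Prod.ext ?_ (Prod.ext rfl ?_)
      · show (inner ℝ q v : ℝ) - G (v, wmap v)
            = (inner ℝ q (ψ.symm q) : ℝ) - G (ψ.symm q, wmap (ψ.symm q))
        rw [← hv]
      · show gradient (fun q' => (inner ℝ q' v : ℝ) - G (v, wmap v)) q
            = gradient (fun q'' => (inner ℝ q'' (ψ.symm q'') : ℝ)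
              - G (ψ.symm q'', wmap (ψ.symm q''))) q
        rw [(hGTc q v (wmap v)).gradient, (hgT q).gradient]
        exact hv
    · rintro ⟨q, rfl⟩
      refine ⟨q, ψ.symm q, wmap (ψ.symm q), ?_, ?_, ?_⟩
      · have h : q - pg1 G (ψ.symm q, wmap (ψ.symm q)) = 0 := by
          have hr : pg1 G (ψ.symm q, wmap (ψ.symm q)) = q := ψ.right_inv q
          rw [hr, sub_self]
        exact ((hGTa q (ψ.symm q) (wmap (ψ.symm q))).gradient).trans h
      · have h : -(pg2 G (ψ.symm q, wmap (ψ.symm q))) = 0 := by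
          rw [hwz, neg_zero]
        exact ((hGTb q (ψ.symm q) (wmap (ψ.symm q))).gradient).trans h
      · refine Prod.ext rfl (Prod.ext rfl ?_)
        show gradient (fun q'' => (inner ℝ q'' (ψ.symm q'') : ℝ)
              - G (ψ.symm q'', wmap (ψ.symm q''))) q
            = gradient (fun q' => (inner ℝ q' (ψ.symm q) : ℝ)
              - G (ψ.symm q, wmap (ψ.symm q))) q
        rw [(hgT q).gradient, (hGTc q (ψ.symm q) (wmap (ψ.symm q))).gradient]
  exact ⟨fun q => G (q, wmap q), wmap, ψ, hwmc, hzero, huniq, fun q => rfl, hgc,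
    fun q => ((hgradg q).gradient).trans (hgrad1 q (wmap q)).symm, hψcoe, hψc, hψsc, hC1, hC2⟩
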